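/- arXiv:2601.20036 — 4 statements merged into one kernel-verified Lean document; each statement's English description precedes it below -/
import Mathlib

section
/- Let S be a finite set of points in the plane and let p, q be two distinct points. If a point x lies strictly to the left of the oriented line from p to q, and c is the center of the circle through p, q, x, then for any two points a, b on the perpendicular bisector of p and q such that a and b are separated by c, with a on the same side of c as points left of the line, the open disk through p and q centered at a contains x while the open disk through p and q centered at b does not. -/
/-- The plane. -/
local notation "E" => EuclideanSpace ℝ (Fin 2)

/-- Twice the signed area of the triangle `a b c`: positive iff `c` lies strictly to the
left of the line through `a` and `b` oriented from `a` to `b`. -/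
noncomputable def cross (a b c : EuclideanSpace ℝ (Fin 2)) : ℝ :=
  (b 0 - a 0) * (c 1 - a 1) - (b 1 - a 1) * (c 0 - a 0)

lemma dist_sq_coord (u v : EuclideanSpace ℝ (Fin 2)) :
    dist u v ^ 2 = (u 0 - v 0) ^ 2 + (u 1 - v 1) ^ 2 := by
  rw [EuclideanSpace.dist_eq, Real.sq_sqrt (by positivity)]
  simp [Fin.sum_univ_two, Real.dist_eq, sq_abs]

/-- Pure real-number core: if `m` is on the bisector of `p,q`, shifted left of the
circumcenter `c`, then `m` is strictly closer to `x` than to `p` (in squared distance). -/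
lemma core (p0 p1 q0 q1 x0 x1 c0 c1 m0 m1 : ℝ)
    (hd : 0 < (p0 - q0) ^ 2 + (p1 - q1) ^ 2)
    (hx : 0 < (q0 - p0) * (x1 - p1) - (q1 - p1) * (x0 - p0))
    (hcb2 : (c0 - p0) ^ 2 + (c1 - p1) ^ 2 = (c0 - q0) ^ 2 + (c1 - q1) ^ 2)
    (hcx2 : (c0 - x0) ^ 2 + (c1 - x1) ^ 2 = (c0 - p0) ^ 2 + (c1 - p1) ^ 2)
    (hm2 : (m0 - p0) ^ 2 + (m1 - p1) ^ 2 = (m0 - q0) ^ 2 + (m1 - q1) ^ 2)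
    (hcm : (q0 - p0) * (c1 - p1) - (q1 - p1) * (c0 - p0)
         < (q0 - p0) * (m1 - p1) - (q1 - p1) * (m0 - p0)) :
    (m0 - x0) ^ 2 + (m1 - x1) ^ 2 < (m0 - p0) ^ 2 + (m1 - p1) ^ 2 := by
  have hperp : (m0 - c0) * (q0 - p0) + (m1 - c1) * (q1 - p1) = 0 := by
    linear_combination (hm2 - hcb2) / 2
  have key : ((q0 - p0) * (m1 - p1) - (q1 - p1) * (m0 - p0)
        - ((q0 - p0) * (c1 - p1) - (q1 - p1) * (c0 - p0)))
      * ((q0 - p0) * (x1 - p1) - (q1 - p1) * (x0 - p0))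
      = ((p0 - q0) ^ 2 + (p1 - q1) ^ 2)
        * ((m0 - c0) * (x0 - p0) + (m1 - c1) * (x1 - p1)) := by
    linear_combination (-((x0 - p0) * (q0 - p0) + (x1 - p1) * (q1 - p1))) * hperp
  have hprod : 0 < ((p0 - q0) ^ 2 + (p1 - q1) ^ 2)
      * ((m0 - c0) * (x0 - p0) + (m1 - c1) * (x1 - p1)) := by
    rw [← key]; exact mul_pos (by linarith) hx
  have hin : 0 < (m0 - c0) * (x0 - p0) + (m1 - c1) * (x1 - p1) := by
    rcases mul_pos_iff.mp hprod with ⟨_, h⟩ | ⟨h, _⟩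
    · exact h
    · linarith
  nlinarith [hin, hcx2]

lemma core2 (p0 p1 q0 q1 x0 x1 c0 c1 m0 m1 : ℝ)
    (hd : 0 < (p0 - q0) ^ 2 + (p1 - q1) ^ 2)
    (hx : 0 < (q0 - p0) * (x1 - p1) - (q1 - p1) * (x0 - p0))
    (hcb2 : (c0 - p0) ^ 2 + (c1 - p1) ^ 2 = (c0 - q0) ^ 2 + (c1 - q1) ^ 2)
    (hcx2 : (c0 - x0) ^ 2 + (c1 - x1) ^ 2 = (c0 - p0) ^ 2 + (c1 - p1) ^ 2)
    (hm2 : (m0 - p0) ^ 2 + (m1 - p1) ^ 2 = (m0 - q0) ^ 2 + (m1 - q1) ^ 2)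
    (hmc : (q0 - p0) * (m1 - p1) - (q1 - p1) * (m0 - p0)
         < (q0 - p0) * (c1 - p1) - (q1 - p1) * (c0 - p0)) :
    (m0 - p0) ^ 2 + (m1 - p1) ^ 2 ≤ (m0 - x0) ^ 2 + (m1 - x1) ^ 2 := by
  have hperp : (m0 - c0) * (q0 - p0) + (m1 - c1) * (q1 - p1) = 0 := by
    linear_combination (hm2 - hcb2) / 2
  have key : ((q0 - p0) * (m1 - p1) - (q1 - p1) * (m0 - p0)
        - ((q0 - p0) * (c1 - p1) - (q1 - p1) * (c0 - p0)))
      * ((q0 - p0) * (x1 - p1) - (q1 - p1) * (x0 - p0))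
      = ((p0 - q0) ^ 2 + (p1 - q1) ^ 2)
        * ((m0 - c0) * (x0 - p0) + (m1 - c1) * (x1 - p1)) := by
    linear_combination (-((x0 - p0) * (q0 - p0) + (x1 - p1) * (q1 - p1))) * hperp
  have hprod : ((p0 - q0) ^ 2 + (p1 - q1) ^ 2)
      * ((m0 - c0) * (x0 - p0) + (m1 - c1) * (x1 - p1)) < 0 := by
    rw [← key]; exact mul_neg_of_neg_of_pos (by linarith) hx
  have hin : (m0 - c0) * (x0 - p0) + (m1 - c1) * (x1 - p1) < 0 := by
    rcases mul_neg_iff.mp hprod with ⟨_, h⟩ | ⟨h, _⟩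
    · exact h
    · linarith
  nlinarith [hin, hcx2]

/-- If `x` is strictly left of the oriented line `pq`, `c` is the circumcenter of `p,q,x`,
and `a`, `b` lie on the bisector of `p,q` separated by `c` with `a` on the left side of `c`,
then the open disk through `p,q` centered at `a` contains `x` while the one centered at `b`
does not. -/
theorem stmt0 (S : Set (EuclideanSpace ℝ (Fin 2))) (hS : S.Finite)
    (p q x c a b : E) (hpq : p ≠ q)
    (hx : 0 < cross p q x)
    (hcb : dist c p = dist c q) (hcx : dist c x = dist c p)
    (ha : dist a p = dist a q) (hb : dist b p = dist b q)
    (hbc : cross p q b < cross p q c) (hca : cross p q c < cross p q a) :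
    dist a x < dist a p ∧ ¬ dist b x < dist b p := by
  have hd : 0 < (p 0 - q 0) ^ 2 + (p 1 - q 1) ^ 2 := by
    rw [← dist_sq_coord]
    have : (0:ℝ) < dist p q := dist_pos.2 hpq
    positivity
  have hcb2 := congrArg (· ^ 2) hcb
  have hcx2 := congrArg (· ^ 2) hcx
  have ha2 := congrArg (· ^ 2) ha
  have hb2 := congrArg (· ^ 2) hb
  simp only [dist_sq_coord] at hcb2 hcx2 ha2 hb2
  unfold cross at hx hbc hca
  constructor
  · refine lt_of_pow_lt_pow_left₀ 2 dist_nonneg ?_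
    rw [dist_sq_coord, dist_sq_coord]
    exact core (p 0) (p 1) (q 0) (q 1) (x 0) (x 1) (c 0) (c 1) (a 0) (a 1)
      hd hx hcb2 hcx2 ha2 hca
  · refine not_lt.2 (le_of_pow_le_pow_left₀ two_ne_zero dist_nonneg ?_)
    rw [dist_sq_coord, dist_sq_coord]
    exact core2 (p 0) (p 1) (q 0) (q 1) (x 0) (x 1) (c 0) (c 1) (b 0) (b 1)
      hd hx hcb2 hcx2 hb2 hbc
end

section
/- Let S be a finite set of points in the plane, and let p, q ∈ S be distinct. Let D be a closed disk whose boundary passes through p and q. The chord pq divides D into two closed regions. If each of these two regions contains at least k points of S, then every closed disk containing both p and q contains at least k points of S. -/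
/-- The plane. -/
local notation "E" => EuclideanSpace ℝ (Fin 2)

set_option maxHeartbeats 1000000 in
/-- Key auxiliary lemma: a point `z` of the disk `D` (center `(c0,c1)`, radius `r`, passing
through `p` and `q`) lying on the line `pq` satisfies `G z ≤ F z`, where `F`/`G` are the
defining quadratics of `D` and of a second disk containing `p` and `q`. -/
private lemma keyA_aux (p0 p1 q0 q1 c0 c1 d0 d1 r r' : ℝ)
    (hL : 0 < (q0 - p0)^2 + (q1 - p1)^2)
    (hp : (p0 - c0)^2 + (p1 - c1)^2 = r^2)
    (hq : (q0 - c0)^2 + (q1 - c1)^2 = r^2)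
    (hp' : (p0 - d0)^2 + (p1 - d1)^2 ≤ r'^2)
    (hq' : (q0 - d0)^2 + (q1 - d1)^2 ≤ r'^2)
    (z0 z1 : ℝ) (hz : (z0 - c0)^2 + (z1 - c1)^2 ≤ r^2)
    (hcr : (q0 - p0) * (z1 - p1) - (q1 - p1) * (z0 - p0) = 0) :
    ((z0 - d0)^2 + (z1 - d1)^2 - r'^2) - ((z0 - c0)^2 + (z1 - c1)^2 - r^2) ≤ 0 := by
  obtain ⟨t, h0, h1⟩ : ∃ t : ℝ, z0 = p0 + t * (q0 - p0) ∧ z1 = p1 + t * (q1 - p1) := by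
    refine ⟨((z0 - p0) * (q0 - p0) + (z1 - p1) * (q1 - p1)) / ((q0 - p0)^2 + (q1 - p1)^2),
      ?_, ?_⟩
    · field_simp
      linear_combination (-(q1 - p1)) * hcr
    · field_simp
      linear_combination (q0 - p0) * hcr
  subst h0 h1
  have hid : t * (1 - t) * ((q0 - p0)^2 + (q1 - p1)^2)
      = r^2 - ((p0 + t * (q0 - p0) - c0)^2 + (p1 + t * (q1 - p1) - c1)^2) := by
    linear_combination (1 - t) * hp + t * hq
  have htt : 0 ≤ t * (1 - t) := by
    have h' : 0 ≤ t * (1 - t) * ((q0 - p0)^2 + (q1 - p1)^2) := by linarith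
    exact (mul_nonneg_iff_of_pos_right hL).mp h'
  have ht0 : 0 ≤ t := by nlinarith
  have ht1 : t ≤ 1 := by nlinarith
  have hHp : ((p0 - d0)^2 + (p1 - d1)^2 - r'^2) - ((p0 - c0)^2 + (p1 - c1)^2 - r^2) ≤ 0 := by
    linarith
  have hHq : ((q0 - d0)^2 + (q1 - d1)^2 - r'^2) - ((q0 - c0)^2 + (q1 - c1)^2 - r^2) ≤ 0 := by
    linarith
  nlinarith [mul_nonneg (by linarith : (0:ℝ) ≤ 1 - t)
      (by linarith : 0 ≤ -(((p0 - d0)^2 + (p1 - d1)^2 - r'^2) - ((p0 - c0)^2 + (p1 - c1)^2 - r^2))),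
    mul_nonneg ht0
      (by linarith : 0 ≤ -(((q0 - d0)^2 + (q1 - d1)^2 - r'^2) - ((q0 - c0)^2 + (q1 - c1)^2 - r^2)))]

set_option maxHeartbeats 1000000 in
/-- If the disk `D` contained points outside the second disk strictly on both sides of the
line `pq`, we would get a contradiction (by intersecting the segment between them with the
line `pq`). -/
private lemma noMix (p0 p1 q0 q1 c0 c1 d0 d1 r r' x0 x1 y0 y1 : ℝ)
    (hA : ∀ z0 z1 : ℝ, (z0 - c0)^2 + (z1 - c1)^2 ≤ r^2 →
      (q0 - p0) * (z1 - p1) - (q1 - p1) * (z0 - p0) = 0 →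
      ((z0 - d0)^2 + (z1 - d1)^2 - r'^2) - ((z0 - c0)^2 + (z1 - c1)^2 - r^2) ≤ 0)
    (hx : (x0 - c0)^2 + (x1 - c1)^2 ≤ r^2)
    (hy : (y0 - c0)^2 + (y1 - c1)^2 ≤ r^2)
    (hax : 0 < (q0 - p0) * (x1 - p1) - (q1 - p1) * (x0 - p0))
    (hby : (q0 - p0) * (y1 - p1) - (q1 - p1) * (y0 - p0) < 0)
    (hx' : r'^2 < (x0 - d0)^2 + (x1 - d1)^2)
    (hy' : r'^2 < (y0 - d0)^2 + (y1 - d1)^2) : False := by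
  set A := (q0 - p0) * (x1 - p1) - (q1 - p1) * (x0 - p0) with hAdef
  set B := (q0 - p0) * (y1 - p1) - (q1 - p1) * (y0 - p0) with hBdef
  have hAB : (0:ℝ) < A - B := by linarith
  have hABne : A - B ≠ 0 := ne_of_gt hAB
  set z0 := (A * y0 - B * x0) / (A - B) with hz0
  set z1 := (A * y1 - B * x1) / (A - B) with hz1
  have hcrz : (q0 - p0) * (z1 - p1) - (q1 - p1) * (z0 - p0) = 0 := by
    rw [hz0, hz1]
    field_simp
    rw [hAdef, hBdef]
    ring
  have hzD : (z0 - c0)^2 + (z1 - c1)^2 ≤ r^2 := by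
    have e : r^2 - ((z0 - c0)^2 + (z1 - c1)^2)
        = ((-B) * (A - B) * (r^2 - ((x0 - c0)^2 + (x1 - c1)^2))
          + A * (A - B) * (r^2 - ((y0 - c0)^2 + (y1 - c1)^2))
          + (-B) * A * ((x0 - y0)^2 + (x1 - y1)^2)) / (A - B)^2 := by
      rw [hz0, hz1]
      field_simp
      ring
    have hnum : 0 ≤ ((-B) * (A - B) * (r^2 - ((x0 - c0)^2 + (x1 - c1)^2))
          + A * (A - B) * (r^2 - ((y0 - c0)^2 + (y1 - c1)^2))
          + (-B) * A * ((x0 - y0)^2 + (x1 - y1)^2)) := by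
      have t1 : 0 ≤ (-B) * (A - B) * (r^2 - ((x0 - c0)^2 + (x1 - c1)^2)) :=
        mul_nonneg (mul_nonneg (by linarith) (by linarith)) (by linarith)
      have t2 : 0 ≤ A * (A - B) * (r^2 - ((y0 - c0)^2 + (y1 - c1)^2)) :=
        mul_nonneg (mul_nonneg (by linarith) (by linarith)) (by linarith)
      have t3 : 0 ≤ (-B) * A * ((x0 - y0)^2 + (x1 - y1)^2) :=
        mul_nonneg (mul_nonneg (by linarith) (by linarith)) (by positivity)
      linarith
    have := div_nonneg hnum (sq_nonneg (A - B))
    linarith [e ▸ this]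
  have hHz : 0 < ((z0 - d0)^2 + (z1 - d1)^2 - r'^2) - ((z0 - c0)^2 + (z1 - c1)^2 - r^2) := by
    have e2 : ((z0 - d0)^2 + (z1 - d1)^2 - r'^2) - ((z0 - c0)^2 + (z1 - c1)^2 - r^2)
        = ((-B) * (((x0 - d0)^2 + (x1 - d1)^2 - r'^2) - ((x0 - c0)^2 + (x1 - c1)^2 - r^2))
          + A * (((y0 - d0)^2 + (y1 - d1)^2 - r'^2) - ((y0 - c0)^2 + (y1 - c1)^2 - r^2)))
          / (A - B) := by
      rw [hz0, hz1]
      field_simp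
      ring
    rw [e2]
    apply div_pos _ hAB
    have t1 : 0 < (-B) * (((x0 - d0)^2 + (x1 - d1)^2 - r'^2) - ((x0 - c0)^2 + (x1 - c1)^2 - r^2)) :=
      mul_pos (by linarith) (by linarith)
    have t2 : 0 < A * (((y0 - d0)^2 + (y1 - d1)^2 - r'^2) - ((y0 - c0)^2 + (y1 - c1)^2 - r^2)) :=
      mul_pos (by linarith) (by linarith)
    linarith
  have := hA z0 z1 hzD hcrz
  linarith

private lemma dsq_aux (x y : EuclideanSpace ℝ (Fin 2)) :
    dist x y ^ 2 = (x 0 - y 0)^2 + (x 1 - y 1)^2 := by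
  rw [EuclideanSpace.dist_eq, Real.sq_sqrt (by positivity)]
  simp [Fin.sum_univ_two, Real.dist_eq, sq_abs]

private lemma ball_aux (a : EuclideanSpace ℝ (Fin 2)) (ρ : ℝ) (hρ : 0 ≤ ρ)
    (x : EuclideanSpace ℝ (Fin 2)) :
    x ∈ Metric.closedBall a ρ ↔ (x 0 - a 0)^2 + (x 1 - a 1)^2 ≤ ρ^2 := by
  rw [Metric.mem_closedBall]
  constructor
  · intro h
    nlinarith [dsq_aux x a, dist_nonneg (x := x) (y := a)]
  · intro h
    nlinarith [dsq_aux x a, dist_nonneg (x := x) (y := a)]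

set_option maxHeartbeats 1000000 in
/-- If a closed disk `D` through `p` and `q` has at least `k` points of `S` in each of the
two regions cut off by the chord `pq`, then every closed disk containing `p` and `q`
contains at least `k` points of `S`. -/
theorem stmt3 (S : Set (EuclideanSpace ℝ (Fin 2))) (hS : S.Finite)
    (p q : E) (hp : p ∈ S) (hq : q ∈ S) (hpq : p ≠ q)
    (c : E) (r : ℝ) (hcp : dist c p = r) (hcq : dist c q = r) (k : ℕ)
    (hleft : k ≤ (S ∩ Metric.closedBall c r ∩ {x | 0 ≤ cross p q x}).ncard)
    (hright : k ≤ (S ∩ Metric.closedBall c r ∩ {x | cross p q x ≤ 0}).ncard) :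
    ∀ c' : E, ∀ r' : ℝ, p ∈ Metric.closedBall c' r' → q ∈ Metric.closedBall c' r' →
      k ≤ (S ∩ Metric.closedBall c' r').ncard := by
  intro c' r' hpc' hqc'
  have hr : 0 ≤ r := hcp ▸ dist_nonneg
  have hr' : 0 ≤ r' := le_trans dist_nonneg (Metric.mem_closedBall.mp hpc')
  have hL : 0 < (q 0 - p 0)^2 + (q 1 - p 1)^2 := by
    have hne : p 0 ≠ q 0 ∨ p 1 ≠ q 1 := by
      by_contra hcon
      push_neg at hcon
      obtain ⟨h1, h2⟩ := hcon
      exact hpq (by ext i; fin_cases i <;> assumption)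
    rcases hne with h | h
    · have h' : q 0 - p 0 ≠ 0 := sub_ne_zero.mpr (Ne.symm h)
      have : 0 < (q 0 - p 0)^2 := by positivity
      nlinarith [sq_nonneg (q 1 - p 1)]
    · have h' : q 1 - p 1 ≠ 0 := sub_ne_zero.mpr (Ne.symm h)
      have : 0 < (q 1 - p 1)^2 := by positivity
      nlinarith [sq_nonneg (q 0 - p 0)]
  have hcp2 : (p 0 - c 0)^2 + (p 1 - c 1)^2 = r^2 := by
    have h2 : r^2 = (c 0 - p 0)^2 + (c 1 - p 1)^2 := by rw [← hcp]; exact dsq_aux c p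
    linear_combination -h2
  have hcq2 : (q 0 - c 0)^2 + (q 1 - c 1)^2 = r^2 := by
    have h2 : r^2 = (c 0 - q 0)^2 + (c 1 - q 1)^2 := by rw [← hcq]; exact dsq_aux c q
    linear_combination -h2
  have hp'2 : (p 0 - c' 0)^2 + (p 1 - c' 1)^2 ≤ r'^2 := (ball_aux c' r' hr' p).mp hpc'
  have hq'2 : (q 0 - c' 0)^2 + (q 1 - c' 1)^2 ≤ r'^2 := (ball_aux c' r' hr' q).mp hqc'
  have hA := keyA_aux (p 0) (p 1) (q 0) (q 1) (c 0) (c 1) (c' 0) (c' 1) r r'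
    hL hcp2 hcq2 hp'2 hq'2
  have hdicho :
      (∀ x : E, x ∈ Metric.closedBall c r → 0 ≤ cross p q x → x ∈ Metric.closedBall c' r') ∨
      (∀ x : E, x ∈ Metric.closedBall c r → cross p q x ≤ 0 → x ∈ Metric.closedBall c' r') := by
    by_contra hcon
    push_neg at hcon
    obtain ⟨⟨x, hx1, hx2, hx3⟩, y, hy1, hy2, hy3⟩ := hcon
    rw [ball_aux c' r' hr'] at hx3 hy3
    push_neg at hx3 hy3
    rw [ball_aux c r hr] at hx1 hy1
    unfold cross at hx2 hy2
    rcases eq_or_lt_of_le hx2 with he | hax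
    · have := hA (x 0) (x 1) hx1 he.symm
      linarith
    rcases eq_or_lt_of_le hy2 with he | hby
    · have := hA (y 0) (y 1) hy1 he
      linarith
    exact noMix (p 0) (p 1) (q 0) (q 1) (c 0) (c 1) (c' 0) (c' 1) r r'
      (x 0) (x 1) (y 0) (y 1) hA hx1 hy1 hax hby hx3 hy3
  rcases hdicho with h | h
  · refine le_trans hleft (Set.ncard_le_ncard ?_ (hS.inter_of_left _))
    rintro x ⟨⟨hxS, hxD⟩, hxc⟩
    exact ⟨hxS, h x hxD hxc⟩
  · refine le_trans hright (Set.ncard_le_ncard ?_ (hS.inter_of_left _))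
    rintro x ⟨⟨hxS, hxD⟩, hxc⟩
    exact ⟨hxS, h x hxD hxc⟩
end

section
/- Let D and D' be two closed disks in the plane whose boundary circles both pass through two distinct points p and q, with centers c and c' respectively on the perpendicular bisector of p and q. If c' lies on the same side of line L(p,q) as, or further toward, the left side than c (i.e., the signed distance of c' to L(p,q) oriented from p to q is at least that of c), then every point of D lying in the closed left halfplane of L(p,q) is contained in D'. -/
/-- The plane. -/
local notation "E" => EuclideanSpace ℝ (Fin 2)

/-- Among closed disks through `p` and `q`, if the center `c'` is at least as far to the
left of the oriented line `pq` as the center `c`, then every point of the disk centered at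
`c` lying in the closed left halfplane belongs to the disk centered at `c'`. -/
theorem stmt4 (p q c c' : E) (hpq : p ≠ q)
    (hc : dist c p = dist c q) (hc' : dist c' p = dist c' q)
    (h : cross p q c ≤ cross p q c') :
    ∀ z ∈ Metric.closedBall c (dist c p), 0 ≤ cross p q z →
      z ∈ Metric.closedBall c' (dist c' p) := by
  intro z hz hcz
  have hd : ∀ x y : E, dist x y ^ 2 = (x 0 - y 0) ^ 2 + (x 1 - y 1) ^ 2 := by
    intro x y
    rw [EuclideanSpace.dist_eq, Real.sq_sqrt (by positivity)]
    simp [Fin.sum_univ_two, Real.dist_eq, sq_abs]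
  have hc2 : (c 0 - p 0) ^ 2 + (c 1 - p 1) ^ 2 = (c 0 - q 0) ^ 2 + (c 1 - q 1) ^ 2 := by
    rw [← hd, ← hd, hc]
  have hc'2 : (c' 0 - p 0) ^ 2 + (c' 1 - p 1) ^ 2 = (c' 0 - q 0) ^ 2 + (c' 1 - q 1) ^ 2 := by
    rw [← hd, ← hd, hc']
  have hz2 : (z 0 - c 0) ^ 2 + (z 1 - c 1) ^ 2 ≤ (c 0 - p 0) ^ 2 + (c 1 - p 1) ^ 2 := by
    rw [← hd, ← hd]
    exact pow_le_pow_left₀ dist_nonneg (Metric.mem_closedBall.mp hz) 2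
  have hpq2 : 0 < (q 0 - p 0) ^ 2 + (q 1 - p 1) ^ 2 := by
    rw [← hd]
    have h0 : dist q p ≠ 0 := dist_ne_zero.mpr (Ne.symm hpq)
    positivity
  have hperp : (c' 0 - c 0) * (q 0 - p 0) + (c' 1 - c 1) * (q 1 - p 1) = 0 := by
    linear_combination (hc'2 - hc2) / 2
  have hperp' : ((z 0 - p 0) * (q 0 - p 0) + (z 1 - p 1) * (q 1 - p 1)) *
      ((c' 0 - c 0) * (q 0 - p 0) + (c' 1 - c 1) * (q 1 - p 1)) = 0 := by
    rw [hperp]; ring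
  have hs : 0 ≤ cross p q c' - cross p q c := sub_nonneg.mpr h
  unfold cross at hs hcz
  have Vkey : ((q 0 - p 0) ^ 2 + (q 1 - p 1) ^ 2) *
        ((z 0 - c' 0) ^ 2 + (z 1 - c' 1) ^ 2) ≤
      ((q 0 - p 0) ^ 2 + (q 1 - p 1) ^ 2) *
        ((c' 0 - p 0) ^ 2 + (c' 1 - p 1) ^ 2) := by
    linarith [mul_le_mul_of_nonneg_left hz2 hpq2.le, mul_nonneg hs hcz, hperp']
  have key : (z 0 - c' 0) ^ 2 + (z 1 - c' 1) ^ 2 ≤ (c' 0 - p 0) ^ 2 + (c' 1 - p 1) ^ 2 :=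
    le_of_mul_le_mul_left Vkey hpq2
  rw [Metric.mem_closedBall]
  refine le_of_pow_le_pow_left₀ two_ne_zero dist_nonneg ?_
  rw [hd, hd]
  exact key
end

section
/- Let S be a finite set of n points in the plane in general position and let p, q ∈ S be distinct. The centers of circles through p, q and a third point of S divide the bisector b(p,q) into n−1 segments. If s and s' are two adjacent segments sharing the endpoint c_i (the circumcenter of p, q, x_i), then the number of points of S in the open disk through p and q centered at any point of s' differs by exactly one from the number for s: it decreases by one when moving rightward past c_i if x_i is left of L(p,q), and increases by one if x_i is right of L(p,q). -/
/-- The plane. -/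
local notation "E" => EuclideanSpace ℝ (Fin 2)

noncomputable def dsq (u v : E) : ℝ := (u 0 - v 0)^2 + (u 1 - v 1)^2

lemma dist_eq_sqrt (u v : E) : dist u v = Real.sqrt (dsq u v) := by
  rw [EuclideanSpace.dist_eq]
  congr 1
  simp [Fin.sum_univ_two, dsq, Real.dist_eq, sq_abs]

lemma dsq_nonneg (u v : E) : 0 ≤ dsq u v := by unfold dsq; positivity

lemma dist_lt_iff (u v w : E) : dist u v < dist u w ↔ dsq u v < dsq u w := by
  rw [dist_eq_sqrt, dist_eq_sqrt, Real.sqrt_lt_sqrt_iff (dsq_nonneg u v)]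

lemma dist_eq_iff (u v w : E) : dist u v = dist u w ↔ dsq u v = dsq u w := by
  rw [dist_eq_sqrt, dist_eq_sqrt, Real.sqrt_inj (dsq_nonneg u v) (dsq_nonneg u w)]

lemma eq_of_dsq_eq_zero (u v : E) (h : dsq u v = 0) : u = v := by
  unfold dsq at h
  have h0 : u 0 = v 0 := by nlinarith [sq_nonneg (u 0 - v 0), sq_nonneg (u 1 - v 1)]
  have h1 : u 1 = v 1 := by nlinarith [sq_nonneg (u 0 - v 0), sq_nonneg (u 1 - v 1)]
  ext i
  fin_cases i <;> assumption

lemma keyP (p q d e z : E) (hd : dsq d p = dsq d q) (he : dsq e p = dsq e q) :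
    (dsq d z - dsq d p - (dsq e z - dsq e p)) * dsq q p
      = -2 * (cross p q d - cross p q e) * cross p q z := by
  unfold dsq cross at *
  linear_combination (-((q 0 - p 0) * (z 0 - p 0) + (q 1 - p 1) * (z 1 - p 1))) * hd
    + ((q 0 - p 0) * (z 0 - p 0) + (q 1 - p 1) * (z 1 - p 1)) * he

lemma exists_center (p q z : E) (hw : cross p q z ≠ 0) :
    ∃ d : E, dsq d p = dsq d q ∧ dsq d z = dsq d p := by
  have hW : cross p q z = (q 0 - p 0) * (z 1 - p 1) - (q 1 - p 1) * (z 0 - p 0) := rfl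
  set W : ℝ := (q 0 - p 0) * (z 1 - p 1) - (q 1 - p 1) * (z 0 - p 0) with hWdef
  rw [hW] at hw
  set A : ℝ := ((p 0 + q 0)/2 - z 0)^2 + ((p 1 + q 1)/2 - z 1)^2
      - (((p 0 + q 0)/2 - p 0)^2 + ((p 1 + q 1)/2 - p 1)^2) with hA
  set t : ℝ := A / (2 * W) with ht
  set d : E := (WithLp.equiv 2 (Fin 2 → ℝ)).symm
      ![(p 0 + q 0)/2 - t * (q 1 - p 1), (p 1 + q 1)/2 + t * (q 0 - p 0)] with hd
  have hd0 : d 0 = (p 0 + q 0)/2 - t * (q 1 - p 1) := rfl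
  have hd1 : d 1 = (p 1 + q 1)/2 + t * (q 0 - p 0) := rfl
  refine ⟨d, ?_, ?_⟩
  · unfold dsq
    rw [hd0, hd1]; ring
  · have hlin : dsq d z - dsq d p = A - 2 * t * W := by
      unfold dsq; rw [hd0, hd1, hA, hWdef]; ring
    have hz : A - 2 * t * W = 0 := by
      rw [ht]; field_simp; ring
    linarith


lemma sign_iff_aux (U w e1 e2 A B : ℝ) (hU : 0 < U) (hw : w ≠ 0)
    (h1 : A * U = -2 * e1 * w) (h2 : B * U = -2 * e2 * w)
    (hE : 0 < e1 * e2) : (A < 0 ↔ B < 0) := by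
  have hw2 : 0 < w ^ 2 := by positivity
  have hprod : 0 < (A * U) * (B * U) := by
    rw [h1, h2]
    nlinarith
  constructor
  · intro hA
    have hAU : A * U < 0 := mul_neg_of_neg_of_pos hA hU
    have hBU : B * U < 0 := by nlinarith
    nlinarith
  · intro hB
    have hBU : B * U < 0 := mul_neg_of_neg_of_pos hB hU
    have hAU : A * U < 0 := by nlinarith
    nlinarith

lemma neg_of_aux (U w e A : ℝ) (hU : 0 < U) (h : A * U = -2 * e * w) (he : 0 < e * w) :
    A < 0 := by nlinarith

lemma pos_of_aux (U w e A : ℝ) (hU : 0 < U) (h : A * U = -2 * e * w) (he : e * w < 0) :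
    0 < A := by nlinarith

/-- Let `c` be the circumcenter of `p`, `q` and a third point `x` of `S`, and let `a`, `a'`
be points of the two adjacent open segments of the bisector of `p,q` sharing the endpoint
`c` (with `a` to the left and `a'` to the right, no other circumcenter in between, and
neither `a` nor `a'` a circumcenter itself). Then the weights (numbers of points of `S` in
the open disks through `p,q` centered at `a` resp. `a'`) differ by exactly one: the weight
decreases by one moving rightward past `c` when `x` is left of the line `pq`, and increases
by one when `x` is right of it. -/
theorem stmt5 (S : Set (EuclideanSpace ℝ (Fin 2))) (hS : S.Finite)
    (p q : E) (hp : p ∈ S) (hq : q ∈ S) (hpq : p ≠ q)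
    (x c a a' : E) (hx : x ∈ S \ {p, q})
    (hcb : dist c p = dist c q) (hcx : dist c x = dist c p)
    (ha : dist a p = dist a q) (ha' : dist a' p = dist a' q)
    (h1 : cross p q a' < cross p q c) (h2 : cross p q c < cross p q a)
    (hseg : ∀ y ∈ S \ {p, q}, y ≠ x → ∀ d : E, dist d p = dist d q → dist d y = dist d p →
      ¬ (cross p q a' < cross p q d ∧ cross p q d < cross p q a))
    (hagen : ∀ y ∈ S \ {p, q}, dist a y ≠ dist a p)
    (ha'gen : ∀ y ∈ S \ {p, q}, dist a' y ≠ dist a' p) :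
    (0 < cross p q x →
      {z ∈ S | dist a' z < dist a' p}.ncard + 1 = {z ∈ S | dist a z < dist a p}.ncard) ∧
    (cross p q x < 0 →
      {z ∈ S | dist a z < dist a p}.ncard + 1 = {z ∈ S | dist a' z < dist a' p}.ncard) := by
  classical
  -- translate to dsq
  have hcb' : dsq c p = dsq c q := (dist_eq_iff c p q).mp hcb
  have hcx' : dsq c x = dsq c p := (dist_eq_iff c x p).mp hcx
  have ha2 : dsq a p = dsq a q := (dist_eq_iff a p q).mp ha
  have ha'2 : dsq a' p = dsq a' q := (dist_eq_iff a' p q).mp ha'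
  have hU : 0 < dsq q p := by
    rcases lt_or_eq_of_le (dsq_nonneg q p) with h | h
    · exact h
    · exact absurd (eq_of_dsq_eq_zero q p h.symm).symm hpq
  have ha'a : cross p q a' < cross p q a := h1.trans h2
  -- the same-side lemma
  have hside : ∀ z, z ∈ S → z ≠ x → z ≠ p → z ≠ q →
      (dist a z < dist a p ↔ dist a' z < dist a' p) := by
    intro z hzS hzx hzp hzq
    have hzm : z ∈ S \ {p, q} := ⟨hzS, by simp [hzp, hzq]⟩
    rw [dist_lt_iff, dist_lt_iff]
    by_cases hw : cross p q z = 0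
    · have hk := keyP p q a a' z ha2 ha'2
      rw [hw] at hk
      have : dsq a z - dsq a p = dsq a' z - dsq a' p := by
        have := mul_right_cancel₀ (ne_of_gt hU) (by linarith : (dsq a z - dsq a p - (dsq a' z - dsq a' p)) * dsq q p = 0 * dsq q p)
        linarith
      constructor <;> intro h <;> linarith
    · obtain ⟨d, hd1, hd2⟩ := exists_center p q z hw
      have hk1 := keyP p q a d z ha2 hd1
      have hk2 := keyP p q a' d z ha'2 hd1
      rw [hd2] at hk1 hk2
      have hna : dsq a z ≠ dsq a p := fun h => hagen z hzm ((dist_eq_iff a z p).mpr h)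
      have hna' : dsq a' z ≠ dsq a' p := fun h => ha'gen z hzm ((dist_eq_iff a' z p).mpr h)
      have hda : cross p q d ≠ cross p q a := by
        intro h
        apply hna
        have h0 : (dsq a z - dsq a p) * dsq q p = 0 := by
          linear_combination hk1 + 2 * cross p q z * h
        rcases mul_eq_zero.mp h0 with h' | h'
        · linarith
        · exact absurd h' (ne_of_gt hU)
      have hda' : cross p q d ≠ cross p q a' := by
        intro h
        apply hna'
        have h0 : (dsq a' z - dsq a' p) * dsq q p = 0 := by
          linear_combination hk2 + 2 * cross p q z * h
        rcases mul_eq_zero.mp h0 with h' | h'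
        · linarith
        · exact absurd h' (ne_of_gt hU)
      have hns := hseg z hzm hzx d ((dist_eq_iff d p q).mpr hd1) ((dist_eq_iff d z p).mpr hd2)
      push_neg at hns
      -- either cross p q d < cross p q a' or cross p q a < cross p q d
      have hcases : cross p q d < cross p q a' ∨ cross p q a < cross p q d := by
        rcases lt_or_ge (cross p q a') (cross p q d) with h | h
        · exact Or.inr (lt_of_le_of_ne (hns h) (Ne.symm hda))
        · exact Or.inl (lt_of_le_of_ne h hda')
      have hP1 : (dsq a z - dsq a p) * dsq q p = -2 * (cross p q a - cross p q d) * cross p q z := by linarith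
      have hP2 : (dsq a' z - dsq a' p) * dsq q p = -2 * (cross p q a' - cross p q d) * cross p q z := by linarith
      have hEprod : 0 < (cross p q a - cross p q d) * (cross p q a' - cross p q d) := by
        rcases hcases with hc | hc
        · have e1 : 0 < cross p q a - cross p q d := by linarith
          have e2 : 0 < cross p q a' - cross p q d := by linarith
          exact mul_pos e1 e2
        · have e1 : cross p q a - cross p q d < 0 := by linarith
          have e2 : cross p q a' - cross p q d < 0 := by linarith
          exact mul_pos_of_neg_of_neg e1 e2
      have hiff := sign_iff_aux (dsq q p) (cross p q z) (cross p q a - cross p q d)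
        (cross p q a' - cross p q d) (dsq a z - dsq a p) (dsq a' z - dsq a' p)
        hU hw hP1 hP2 hEprod
      constructor <;> intro h
      · linarith [hiff.mp (by linarith : dsq a z - dsq a p < 0)]
      · linarith [hiff.mpr (by linarith : dsq a' z - dsq a' p < 0)]
  have hxS : x ∈ S := hx.1
  have hxp : x ≠ p := by intro h; apply hx.2; simp [h]
  have hxq : x ≠ q := by intro h; apply hx.2; simp [h]
  have hfin : {z ∈ S | dist a z < dist a p}.Finite := hS.subset (Set.sep_subset _ _)
  have hfin' : {z ∈ S | dist a' z < dist a' p}.Finite := hS.subset (Set.sep_subset _ _)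
  have hpnot : ∀ b : E, ¬ dist b p < dist b p := fun b => lt_irrefl _
  constructor
  · intro hx0
    -- x in disk of a, not in disk of a'
    have hk1 := keyP p q a c x ha2 hcb'
    have hP1 : (dsq a x - dsq a p) * dsq q p
        = -2 * (cross p q a - cross p q c) * cross p q x := by
      linear_combination hk1 + (dsq q p) * hcx'
    have hxa : dsq a x < dsq a p := by
      have := neg_of_aux (dsq q p) (cross p q x) (cross p q a - cross p q c)
        (dsq a x - dsq a p) hU hP1 (mul_pos (by linarith) hx0)
      linarith
    have hxa' : dsq a' p < dsq a' x := by
      have hk2 := keyP p q a' c x ha'2 hcb'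
      have hP2 : (dsq a' x - dsq a' p) * dsq q p
          = -2 * (cross p q a' - cross p q c) * cross p q x := by
        linear_combination hk2 + (dsq q p) * hcx'
      have := pos_of_aux (dsq q p) (cross p q x) (cross p q a' - cross p q c)
        (dsq a' x - dsq a' p) hU hP2 (mul_neg_of_neg_of_pos (by linarith) hx0)
      linarith
    have hxnot : x ∉ {z ∈ S | dist a' z < dist a' p} := by
      intro h
      have := (dist_lt_iff a' x p).mp h.2
      linarith
    have hset : {z ∈ S | dist a z < dist a p} = insert x {z ∈ S | dist a' z < dist a' p} := by
      ext z
      simp only [Set.mem_setOf_eq, Set.mem_insert_iff]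
      constructor
      · rintro ⟨hzS, hlt⟩
        by_cases hzx : z = x
        · exact Or.inl hzx
        · have hzp : z ≠ p := by rintro rfl; exact hpnot a hlt
          have hzq : z ≠ q := by
            rintro rfl
            rw [← ha] at hlt
            exact hpnot a hlt
          exact Or.inr ⟨hzS, (hside z hzS hzx hzp hzq).mp hlt⟩
      · rintro (rfl | ⟨hzS, hlt⟩)
        · exact ⟨hxS, (dist_lt_iff a z p).mpr hxa⟩
        · have hzp : z ≠ p := by rintro rfl; exact hpnot a' hlt
          have hzq : z ≠ q := by
            rintro rfl
            rw [← ha'] at hlt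
            exact hpnot a' hlt
          have hzx : z ≠ x := by
            rintro rfl
            exact hxnot ⟨hzS, hlt⟩
          exact ⟨hzS, (hside z hzS hzx hzp hzq).mpr hlt⟩
    rw [hset, Set.ncard_insert_of_notMem hxnot hfin']
  · intro hx0
    have hk1 := keyP p q a c x ha2 hcb'
    have hP1 : (dsq a x - dsq a p) * dsq q p
        = -2 * (cross p q a - cross p q c) * cross p q x := by
      linear_combination hk1 + (dsq q p) * hcx'
    have hxa : dsq a p < dsq a x := by
      have := pos_of_aux (dsq q p) (cross p q x) (cross p q a - cross p q c)
        (dsq a x - dsq a p) hU hP1 (mul_neg_of_pos_of_neg (by linarith) hx0)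
      linarith
    have hxa' : dsq a' x < dsq a' p := by
      have hk2 := keyP p q a' c x ha'2 hcb'
      have hP2 : (dsq a' x - dsq a' p) * dsq q p
          = -2 * (cross p q a' - cross p q c) * cross p q x := by
        linear_combination hk2 + (dsq q p) * hcx'
      have := neg_of_aux (dsq q p) (cross p q x) (cross p q a' - cross p q c)
        (dsq a' x - dsq a' p) hU hP2 (mul_pos_of_neg_of_neg (by linarith) hx0)
      linarith
    have hxnot : x ∉ {z ∈ S | dist a z < dist a p} := by
      intro h
      have := (dist_lt_iff a x p).mp h.2
      linarith
    have hset : {z ∈ S | dist a' z < dist a' p} = insert x {z ∈ S | dist a z < dist a p} := by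
      ext z
      simp only [Set.mem_setOf_eq, Set.mem_insert_iff]
      constructor
      · rintro ⟨hzS, hlt⟩
        by_cases hzx : z = x
        · exact Or.inl hzx
        · have hzp : z ≠ p := by rintro rfl; exact hpnot a' hlt
          have hzq : z ≠ q := by
            rintro rfl
            rw [← ha'] at hlt
            exact hpnot a' hlt
          exact Or.inr ⟨hzS, (hside z hzS hzx hzp hzq).mpr hlt⟩
      · rintro (rfl | ⟨hzS, hlt⟩)
        · exact ⟨hxS, (dist_lt_iff a' z p).mpr hxa'⟩
        · have hzp : z ≠ p := by rintro rfl; exact hpnot a hlt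
          have hzq : z ≠ q := by
            rintro rfl
            rw [← ha] at hlt
            exact hpnot a hlt
          have hzx : z ≠ x := by
            rintro rfl
            exact hxnot ⟨hzS, hlt⟩
          exact ⟨hzS, (hside z hzS hzx hzp hzq).mp hlt⟩
    rw [hset, Set.ncard_insert_of_notMem hxnot hfin]
end
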